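/- Let A be a reduced commutative ring, n ≥ 2, and B = A[x]/(x^n). An A-algebra endomorphism of B sending x to a₁x + a₂x² + … + a_{n-1}x^{n-1} is an automorphism if and only if a₁ is a unit of A. Hence the A-algebra automorphisms of B are in bijection with A^× × A^{n-2}. -/

import Mathlib

open Polynomial

set_option linter.unusedSectionVars false

section Aux
variable {A : Type*} [CommRing A] [Nontrivial A] {n : ℕ}

local notation "Q" => AdjoinRoot ((X : Polynomial A) ^ n)
local notation "r" => (AdjoinRoot.root ((X : Polynomial A) ^ n))

lemma rpow_n : (r : Q) ^ n = 0 := by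
  rw [← AdjoinRoot.mk_X, ← map_pow, AdjoinRoot.mk_self]

noncomputable def bQ (A : Type*) [CommRing A] [Nontrivial A] (n : ℕ) :
    Module.Basis (Fin n) A (AdjoinRoot ((X : Polynomial A) ^ n)) :=
  (AdjoinRoot.powerBasis' (monic_X_pow n)).basis.reindex (finCongr (natDegree_X_pow n))

lemma bQ_apply (i : Fin n) : bQ A n i = (r : Q) ^ (i : ℕ) := by
  rw [bQ, Module.Basis.reindex_apply, PowerBasis.basis_eq_pow, AdjoinRoot.powerBasis'_gen]; rfl

noncomputable def comb (a : Fin n → A) : Q :=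
  ∑ j : Fin n, a j • (r : Q) ^ (j : ℕ)

lemma comb_eq (a : Fin n → A) :
    comb a = ∑ j : Fin n, algebraMap A Q (a j) * (r:Q) ^ (j : ℕ) := by
  simp [comb, Algebra.smul_def]

lemma repr_comb (a : Fin n → A) (i : Fin n) : (bQ A n).repr (comb a) i = a i := by
  have h : comb a = ∑ j : Fin n, a j • bQ A n j := by simp [comb, bQ_apply]
  rw [h, Module.Basis.repr_sum_self]

lemma eq_comb_repr (q : Q) : q = comb (fun j => (bQ A n).repr q j) := by
  simp only [comb, ← bQ_apply, Module.Basis.sum_repr]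

/-- coefficient extraction: scalar times a basis power is zero iff scalar is zero -/
lemma eq_zero_of_smul_rpow {c : A} (i : Fin n) (h : algebraMap A Q c * (r:Q) ^ (i:ℕ) = 0) :
    c = 0 := by
  have h2 : (bQ A n).repr (c • (r:Q) ^ (i:ℕ)) i = 0 := by
    rw [Algebra.smul_def, h]; simp
  rwa [← bQ_apply, map_smul, Finsupp.smul_apply, Module.Basis.repr_self,
    Finsupp.single_eq_same, smul_eq_mul, mul_one] at h2

/-- key: if r^(i+1) divides c * r^i with i < n, then c = 0 -/
lemma eq_zero_of_rpow_dvd {c : A} {i : ℕ} (hi : i < n)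
    (h : (r:Q) ^ (i+1) ∣ algebraMap A Q c * (r:Q) ^ i) : c = 0 := by
  obtain ⟨q, hq⟩ := h
  have key : algebraMap A Q c * (r:Q) ^ (n-1) = 0 := by
    have h1 : algebraMap A Q c * (r:Q) ^ (n-1)
        = (algebraMap A Q c * (r:Q) ^ i) * (r:Q) ^ (n-1-i) := by
      rw [mul_assoc, ← pow_add]
      congr 2
      omega
    have h2 : (r:Q) ^ (i + 1 + (n-1-i)) = 0 := by
      obtain ⟨m, hm⟩ : ∃ m, i + 1 + (n-1-i) = n + m := ⟨i + 1 + (n-1-i) - n, by omega⟩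
      rw [hm, pow_add, rpow_n, zero_mul]
    calc algebraMap A Q c * (r:Q) ^ (n-1)
        = ((r:Q) ^ (i+1) * (r:Q) ^ (n-1-i)) * q := by rw [h1, hq]; ring
      _ = 0 := by rw [← pow_add, h2, zero_mul]
  exact eq_zero_of_smul_rpow (⟨n-1, by omega⟩ : Fin n) key

variable (hn : n ≥ 2)

lemma r_dvd_comb {a : Fin n → A} (ha0 : a ⟨0, by omega⟩ = 0) : (r:Q) ∣ comb a := by
  rw [comb_eq]
  apply Finset.dvd_sum
  intro j _
  rcases eq_or_ne (j:ℕ) 0 with h | h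
  · have : j = ⟨0, by omega⟩ := Fin.ext h
    rw [this, ha0]; simp
  · exact Dvd.dvd.mul_left (dvd_pow_self _ h) _

lemma rsq_dvd_comb_sub {a : Fin n → A} (ha0 : a ⟨0, by omega⟩ = 0) :
    (r:Q)^2 ∣ comb a - algebraMap A Q (a ⟨1, by omega⟩) * (r:Q) := by
  have h1 : comb a - algebraMap A Q (a ⟨1, by omega⟩) * (r:Q)
      = ∑ j ∈ Finset.univ.erase (⟨1, by omega⟩ : Fin n),
          algebraMap A Q (a j) * (r:Q) ^ (j:ℕ) := by
    rw [comb_eq, ← Finset.sum_erase_add _ _ (Finset.mem_univ (⟨1, by omega⟩ : Fin n))]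
    simp
  rw [h1]
  apply Finset.dvd_sum
  intro j hj
  rcases eq_or_ne (j:ℕ) 0 with h | h
  · have : j = ⟨0, by omega⟩ := Fin.ext h
    rw [this, ha0]; simp
  · have hj1 : (j:ℕ) ≠ 1 := fun hc => (Finset.mem_erase.mp hj).1 (Fin.ext hc)
    exact Dvd.dvd.mul_left (pow_dvd_pow _ (by omega)) _

lemma rpow_dvd_comb_pow {a : Fin n → A} (ha0 : a ⟨0, by omega⟩ = 0) (k : ℕ) :
    (r:Q)^(k+1) ∣ (comb a)^k - algebraMap A Q ((a ⟨1, by omega⟩)^k) * (r:Q)^k := by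
  induction k with
  | zero => simp
  | succ k ih =>
    set c := algebraMap A Q (a ⟨1, by omega⟩) with hc
    have key : (comb a)^(k+1) - algebraMap A Q ((a ⟨1, by omega⟩)^(k+1)) * (r:Q)^(k+1)
        = (comb a)^k * (comb a - c * r) + c * r * ((comb a)^k - algebraMap A Q ((a ⟨1, by omega⟩)^k) * (r:Q)^k) := by
      rw [map_pow, map_pow]
      ring
    rw [key]
    apply dvd_add
    · have : (r:Q)^(k+2) = (r:Q)^k * (r:Q)^2 := by rw [← pow_add]
      rw [show k+1+1 = k+2 from rfl, this]
      exact mul_dvd_mul (pow_dvd_pow_of_dvd (r_dvd_comb hn ha0) k) (rsq_dvd_comb_sub hn ha0)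
    · have : (r:Q)^(k+2) = (r:Q) * (r:Q)^(k+1) := by rw [← pow_succ']
      rw [show k+1+1 = k+2 from rfl, this]
      calc (r:Q) * (r:Q)^(k+1) ∣ (r:Q) * ((comb a)^k - algebraMap A Q ((a ⟨1, by omega⟩)^k) * (r:Q)^k) :=
            mul_dvd_mul_left _ ih
        _ ∣ c * ((r:Q) * ((comb a)^k - algebraMap A Q ((a ⟨1, by omega⟩)^k) * (r:Q)^k)) :=
            Dvd.intro_left c rfl
        _ = c * (r:Q) * ((comb a)^k - algebraMap A Q ((a ⟨1, by omega⟩)^k) * (r:Q)^k) := by ring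

lemma comb_pow_n_eq_zero {a : Fin n → A} (ha0 : a ⟨0, by omega⟩ = 0) : (comb a)^n = 0 := by
  rw [← zero_dvd_iff, ← rpow_n]
  exact pow_dvd_pow_of_dvd (r_dvd_comb hn ha0) n


lemma sub_repr0_eq_comb (q : Q) :
    q - algebraMap A Q ((bQ A n).repr q ⟨0, by omega⟩) =
      comb (fun j => if j = (⟨0, by omega⟩ : Fin n) then 0 else (bQ A n).repr q j) := by
  have h : comb (fun j => (bQ A n).repr q j)
      - comb (fun j => if j = (⟨0, by omega⟩ : Fin n) then 0 else (bQ A n).repr q j)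
      = algebraMap A Q ((bQ A n).repr q ⟨0, by omega⟩) := by
    rw [comb, comb, ← Finset.sum_sub_distrib]
    rw [Finset.sum_eq_single (⟨0, by omega⟩ : Fin n)]
    · simp [← AdjoinRoot.algebraMap_eq, Algebra.algebraMap_eq_smul_one]
    · intro j _ hj
      rw [if_neg hj, sub_self]
    · simp
  linear_combination h + eq_comb_repr q

lemma r_dvd_sub_repr0 (q : Q) :
    (r:Q) ∣ q - algebraMap A Q ((bQ A n).repr q ⟨0, by omega⟩) := by
  rw [sub_repr0_eq_comb hn q]
  exact r_dvd_comb hn (by simp)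

lemma surj_of_unit (ψ : Q →ₐ[A] Q) (a : Fin n → A) (ha0 : a ⟨0, by omega⟩ = 0)
    (hψ : ψ (r:Q) = comb a) (hu : IsUnit (a ⟨1, by omega⟩)) : Function.Surjective ψ := by
  obtain ⟨u, hu⟩ := hu
  have claim : ∀ k : ℕ, ∃ s, (r:Q)^k ∣ (r:Q) - ψ s := by
    intro k
    induction k with
    | zero => exact ⟨0, one_dvd _⟩
    | succ k ih =>
      obtain ⟨s, q, hq⟩ := ih
      set c := (bQ A n).repr q ⟨0, by omega⟩ with hc
      have hqc : (r:Q) ∣ q - algebraMap A Q c := r_dvd_sub_repr0 hn q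
      obtain ⟨m, hm⟩ := rpow_dvd_comb_pow hn ha0 k
      have hcv : algebraMap A Q (c * ((↑u⁻¹:A))^k) * algebraMap A Q ((a ⟨1, by omega⟩)^k)
          = algebraMap A Q c := by
        rw [← map_mul]
        congr 1
        rw [← hu, mul_assoc, ← mul_pow, Units.inv_mul, one_pow, mul_one]
      refine ⟨s + algebraMap A Q (c * ((↑u⁻¹:A))^k) * (r:Q)^k, ?_⟩
      have expand : (r:Q) - ψ (s + algebraMap A Q (c * ((↑u⁻¹:A))^k) * (r:Q)^k)
          = (q - algebraMap A Q c) * (r:Q)^k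
            - algebraMap A Q (c * ((↑u⁻¹:A))^k) * ((r:Q)^(k+1) * m) := by
        rw [map_add, map_mul, AlgHom.commutes, map_pow, hψ]
        linear_combination (norm := ring_nf) hq - algebraMap A Q (c * ((↑u⁻¹:A))^k) * hm - (r:Q)^k * hcv
      rw [expand]
      apply dvd_sub
      · have h1 : (r:Q)^(k+1) = (r:Q) * (r:Q)^k := by rw [pow_succ']
        rw [h1]
        exact mul_dvd_mul hqc dvd_rfl
      · exact Dvd.dvd.mul_left (Dvd.intro m rfl) _
  obtain ⟨s, hs⟩ := claim n
  rw [rpow_n, zero_dvd_iff, sub_eq_zero] at hs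
  have hrange : (⊤ : Subalgebra A Q) ≤ ψ.range := by
    rw [← AdjoinRoot.adjoinRoot_eq_top (f := ((X : Polynomial A) ^ n))]
    apply Algebra.adjoin_le
    rw [Set.singleton_subset_iff]
    exact ⟨s, hs.symm⟩
  intro y
  obtain ⟨s', hs'⟩ := hrange (Algebra.mem_top (x := y))
  exact ⟨s', hs'⟩


lemma mul_eq_one_of (ψ : Q →ₐ[A] Q) (a b : Fin n → A) (ha0 : a ⟨0, by omega⟩ = 0)
    (hψ : ψ (r:Q) = comb a) (hw : ψ (comb b) = (r:Q)) :
    b ⟨1, by omega⟩ * a ⟨1, by omega⟩ = 1 ∧ b ⟨0, by omega⟩ = 0 := by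
  set a1 := a ⟨1, by omega⟩
  set b0 := b ⟨0, by omega⟩
  set b1 := b ⟨1, by omega⟩
  set d := b1 * a1 - 1 with hd
  have hsum : (r:Q) = ∑ j : Fin n, algebraMap A Q (b j) * (comb a)^(j:ℕ) := by
    rw [← hw, comb_eq, map_sum]
    refine Finset.sum_congr rfl fun j _ => ?_
    rw [map_mul, map_pow, hψ, AlgHom.commutes]
  -- split off the first two terms
  have h10 : (⟨1, by omega⟩ : Fin n) ∈ (Finset.univ.erase (⟨0, by omega⟩ : Fin n)) := by
    rw [Finset.mem_erase]
    exact ⟨by simp, Finset.mem_univ _⟩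
  have hsplit : (r:Q) = algebraMap A Q b0 + algebraMap A Q b1 * comb a
      + ∑ j ∈ (Finset.univ.erase (⟨0, by omega⟩ : Fin n)).erase ⟨1, by omega⟩,
          algebraMap A Q (b j) * (comb a)^(j:ℕ) := by
    rw [hsum, ← Finset.add_sum_erase _ _ (Finset.mem_univ (⟨0, by omega⟩ : Fin n)),
      ← Finset.add_sum_erase _ _ h10]
    simp [add_assoc, -Finset.sum_erase_eq_sub]; rfl
  have hE : (r:Q)^2 ∣ (r:Q) - algebraMap A Q b0 - algebraMap A Q b1 * comb a := by
    have : (r:Q) - algebraMap A Q b0 - algebraMap A Q b1 * comb a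
        = ∑ j ∈ (Finset.univ.erase (⟨0, by omega⟩ : Fin n)).erase ⟨1, by omega⟩,
          algebraMap A Q (b j) * (comb a)^(j:ℕ) := by
      rw [hsplit]; ring
    rw [this]
    apply Finset.dvd_sum
    intro j hj
    rw [Finset.mem_erase, Finset.mem_erase] at hj
    have hj2 : 2 ≤ (j:ℕ) := by
      rcases Nat.lt_or_ge (j:ℕ) 2 with h | h
      · interval_cases h' : (j:ℕ)
        · exact absurd (Fin.ext h') hj.2.1
        · exact absurd (Fin.ext h') hj.1
      · exact h
    calc (r:Q)^2 ∣ (r:Q)^(j:ℕ) := pow_dvd_pow _ hj2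
      _ ∣ (comb a)^(j:ℕ) := pow_dvd_pow_of_dvd (r_dvd_comb hn ha0) _
      _ ∣ algebraMap A Q (b j) * (comb a)^(j:ℕ) := Dvd.intro_left _ rfl
  have h2 : (r:Q)^2 ∣ algebraMap A Q b0 + algebraMap A Q d * (r:Q) := by
    have heq : algebraMap A Q b0 + algebraMap A Q d * (r:Q)
        = -(( (r:Q) - algebraMap A Q b0 - algebraMap A Q b1 * comb a)
            + algebraMap A Q b1 * (comb a - algebraMap A Q a1 * (r:Q))) := by
      rw [hd, map_sub, map_mul, map_one]
      ring
    rw [heq]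
    exact dvd_neg.mpr (dvd_add hE (Dvd.dvd.mul_left (rsq_dvd_comb_sub hn ha0) _))
  obtain ⟨z, hz⟩ := h2
  have e1 : (r:Q)^2 * (r:Q)^(n-1) = ((r:Q)^n) * (r:Q) := by
    rw [← pow_add, ← pow_succ]; congr 1; omega
  have e2 : (r:Q) * (r:Q)^(n-1) = (r:Q)^n := by
    rw [← pow_succ']; congr 1; omega
  have hb0 : b0 = 0 := by
    apply eq_zero_of_smul_rpow (⟨n-1, by omega⟩ : Fin n)
    show algebraMap A Q b0 * (r:Q)^((n-1 : ℕ)) = 0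
    calc algebraMap A Q b0 * (r:Q)^(n-1)
        = (algebraMap A Q b0 + algebraMap A Q d * (r:Q)) * (r:Q)^(n-1)
          - algebraMap A Q d * ((r:Q) * (r:Q)^(n-1)) := by ring
      _ = ((r:Q)^2 * (r:Q)^(n-1)) * z - algebraMap A Q d * (r:Q)^n := by rw [hz, e2]; ring
      _ = 0 := by rw [e1, rpow_n]; ring
  have hd0 : d = 0 := by
    have hdvd : (r:Q)^(1+1) ∣ algebraMap A Q d * (r:Q)^1 := by
      rw [pow_one]
      have heq2 : algebraMap A Q d * (r:Q) = algebraMap A Q b0 + algebraMap A Q d * (r:Q) := by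
        rw [hb0, map_zero, zero_add]
      rw [heq2]
      exact ⟨z, hz⟩
    exact eq_zero_of_rpow_dvd (n := n) (by omega) hdvd
  constructor
  · have := hd0
    rw [hd, sub_eq_zero] at this
    exact this
  · exact hb0

theorem bij_iff (ψ : Q →ₐ[A] Q) (a : Fin n → A) (ha0 : a ⟨0, by omega⟩ = 0)
    (hψ : ψ (r:Q) = comb a) :
    Function.Bijective ψ ↔ IsUnit (a ⟨1, by omega⟩) := by
  constructor
  · intro hb
    set σ := AlgEquiv.ofBijective ψ hb with hσ
    set b : Fin n → A := fun j => (bQ A n).repr (σ.symm (r:Q)) j with hbdef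
    have hw : ψ (comb b) = (r:Q) := by
      have h1 : comb b = σ.symm (r:Q) := (eq_comb_repr _).symm
      rw [h1]
      exact σ.apply_symm_apply (r:Q)
    obtain ⟨h1, _⟩ := mul_eq_one_of hn ψ a b ha0 hψ hw
    exact IsUnit.of_mul_eq_one _ (by rw [mul_comm]; exact h1)
  · intro hu
    have hsurj := surj_of_unit hn ψ a ha0 hψ hu
    have : Module.Finite A (AdjoinRoot ((X : Polynomial A) ^ n)) :=
      Module.Finite.of_basis (bQ A n)
    exact ⟨OrzechProperty.injective_of_surjective_endomorphism ψ.toLinearMap hsurj, hsurj⟩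

end Aux

section Aux2
variable {A : Type*} [CommRing A] [Nontrivial A] {n : ℕ}

local notation "Q" => AdjoinRoot ((X : Polynomial A) ^ n)
local notation "r" => (AdjoinRoot.root ((X : Polynomial A) ^ n))

lemma repr0_eq_zero [IsReduced A] (hn : n ≥ 2) {w : Q} (hw : w ^ n = 0) :
    (bQ A n).repr w ⟨0, by omega⟩ = 0 := by
  set c := (bQ A n).repr w ⟨0, by omega⟩ with hcdef
  have h1 : (r:Q) ∣ w - algebraMap A Q c := r_dvd_sub_repr0 hn w
  have h2 : (r:Q) ∣ algebraMap A Q (c^n) := by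
    have h4 : (r:Q) ∣ w^n - (algebraMap A Q c)^n :=
      dvd_trans h1 (sub_dvd_pow_sub_pow w (algebraMap A Q c) n)
    rw [hw, zero_sub, dvd_neg, ← map_pow] at h4
    exact h4
  obtain ⟨q, hq⟩ := h2
  have e2 : (r:Q) * (r:Q)^(n-1) = (r:Q)^n := by
    rw [← pow_succ']; congr 1; omega
  have h5 : algebraMap A Q (c^n) * (r:Q)^(n-1) = 0 := by
    calc algebraMap A Q (c^n) * (r:Q)^(n-1) = ((r:Q) * (r:Q)^(n-1)) * q := by rw [hq]; ring
      _ = 0 := by rw [e2, rpow_n, zero_mul]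
  have h6 : c^n = 0 := eq_zero_of_smul_rpow (⟨n-1, by omega⟩ : Fin n) h5
  exact IsNilpotent.eq_zero ⟨n, h6⟩

/-- the coefficient function attached to a pair (unit, higher coefficients) -/
def coeffFun (u : Aˣ) (cs : Fin (n-2) → A) : Fin n → A := fun j =>
  if (j:ℕ) = 1 then (u:A)
  else if h : 2 ≤ (j:ℕ) then cs ⟨(j:ℕ)-2, by have := j.isLt; omega⟩ else 0

lemma coeffFun_zero (hn : n ≥ 2) (u : Aˣ) (cs : Fin (n-2) → A) :
    coeffFun u cs ⟨0, by omega⟩ = 0 := by simp [coeffFun]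

lemma coeffFun_one (hn : n ≥ 2) (u : Aˣ) (cs : Fin (n-2) → A) :
    coeffFun u cs ⟨1, by omega⟩ = (u:A) := by simp [coeffFun]

noncomputable def autOf (hn : n ≥ 2) (u : Aˣ) (cs : Fin (n-2) → A) :
    (Q : Type _) ≃ₐ[A] (Q : Type _) :=
  AlgEquiv.ofBijective
    (AdjoinRoot.liftAlgHom ((X : Polynomial A)^n) (Algebra.ofId A Q) (comb (coeffFun u cs))
      (by rw [eval₂_X_pow]; exact comb_pow_n_eq_zero hn (coeffFun_zero hn u cs)))
    ((bij_iff hn _ (coeffFun u cs) (coeffFun_zero hn u cs)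
        (AdjoinRoot.liftAlgHom_root _ _ _ _)).mpr
      (by rw [coeffFun_one hn u cs]; exact u.isUnit))

lemma autOf_root (hn : n ≥ 2) (u : Aˣ) (cs : Fin (n-2) → A) :
    autOf hn u cs (r:Q) = comb (coeffFun u cs) := by
  simp [autOf, AdjoinRoot.liftAlgHom_root]

lemma key_mul [IsReduced A] (hn : n ≥ 2) (σ : (Q : Type _) ≃ₐ[A] (Q : Type _)) :
    (bQ A n).repr (σ.symm (r:Q)) ⟨1, by omega⟩ * (bQ A n).repr (σ (r:Q)) ⟨1, by omega⟩ = 1 := by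
  have ha0 : (bQ A n).repr (σ (r:Q)) ⟨0, by omega⟩ = 0 :=
    repr0_eq_zero hn (by rw [← map_pow, rpow_n, map_zero])
  refine (mul_eq_one_of hn σ.toAlgHom (fun j => (bQ A n).repr (σ (r:Q)) j)
    (fun j => (bQ A n).repr (σ.symm (r:Q)) j) ha0 ?_ ?_).1
  · exact eq_comb_repr (σ (r:Q))
  · show σ (comb _) = (r:Q)
    rw [← eq_comb_repr (σ.symm (r:Q))]
    exact σ.apply_symm_apply _

noncomputable def unitOf [IsReduced A] (hn : n ≥ 2) (σ : (Q : Type _) ≃ₐ[A] (Q : Type _)) :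
    Aˣ where
  val := (bQ A n).repr (σ (r:Q)) ⟨1, by omega⟩
  inv := (bQ A n).repr (σ.symm (r:Q)) ⟨1, by omega⟩
  val_inv := by rw [mul_comm]; exact key_mul hn σ
  inv_val := key_mul hn σ

noncomputable def autEquivQ [IsReduced A] (hn : n ≥ 2) :
    ((Q : Type _) ≃ₐ[A] (Q : Type _)) ≃ (Aˣ × (Fin (n-2) → A)) where
  toFun σ := (unitOf hn σ,
    fun i => (bQ A n).repr (σ (r:Q)) ⟨(i:ℕ)+2, by have := i.isLt; omega⟩)
  invFun p := autOf hn p.1 p.2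
  left_inv σ := by
    have ha0 : (bQ A n).repr (σ (r:Q)) ⟨0, by omega⟩ = 0 :=
      repr0_eq_zero hn (by rw [← map_pow, rpow_n, map_zero])
    have hhom : (autOf hn (unitOf hn σ)
        (fun i => (bQ A n).repr (σ (r:Q)) ⟨(i:ℕ)+2, by have := i.isLt; omega⟩)).toAlgHom
        = σ.toAlgHom := by
      apply AdjoinRoot.algHom_ext
      show autOf hn _ _ (r:Q) = σ (r:Q)
      rw [autOf_root]
      conv_rhs => rw [eq_comb_repr (σ (r:Q))]
      congr 1
      funext j
      rcases Nat.lt_or_ge (j:ℕ) 2 with h | h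
      · interval_cases h' : (j:ℕ)
        · have hj : j = ⟨0, by omega⟩ := Fin.ext h'
          rw [hj, coeffFun_zero hn, ha0]
        · have hj : j = ⟨1, by omega⟩ := Fin.ext h'
          rw [hj, coeffFun_one hn]
          rfl
      · have h2 : ¬ ((j:ℕ) = 1) := by omega
        rw [coeffFun, if_neg h2, dif_pos h]
        congr 1
        exact Fin.ext (by simp; omega)
    exact AlgEquiv.ext fun x => DFunLike.congr_fun hhom x
  right_inv p := by
    obtain ⟨u, cs⟩ := p
    have hval : ∀ i : Fin n, (bQ A n).repr ((autOf hn u cs) (r:Q)) i = coeffFun u cs i := by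
      intro i
      rw [autOf_root, repr_comb]
    refine Prod.ext ?_ ?_
    · apply Units.ext
      show (bQ A n).repr ((autOf hn u cs) (r:Q)) ⟨1, by omega⟩ = (u:A)
      rw [hval, coeffFun_one hn]
    · funext i
      show (bQ A n).repr ((autOf hn u cs) (r:Q)) ⟨(i:ℕ)+2, _⟩ = cs i
      rw [hval]
      have h2 : ¬ (((⟨(i:ℕ)+2, by have := i.isLt; omega⟩ : Fin n) : ℕ) = 1) := by simp
      rw [coeffFun, if_neg h2, dif_pos (by simp)]
      exact congrArg cs (Fin.ext (by simp))

end Aux2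

/-- For `A` reduced and `B = A[x]/(xⁿ)` (`n ≥ 2`): an `A`-algebra endomorphism sending `x`
to `a₁x + ⋯ + a_{n-1}x^{n-1}` is an automorphism iff `a₁` is a unit; hence the `A`-algebra
automorphisms of `B` are in bijection with `Aˣ × A^{n-2}`. -/
theorem stmt_5 (A : Type*) [CommRing A] [IsReduced A] (n : ℕ) (hn : 2 ≤ n)
    (B : Type*) [CommRing B] [Algebra A B]
    (e : B ≃ₐ[A] (Polynomial A ⧸ Ideal.span {(X : Polynomial A) ^ n}))
    (xB : B) (hx : e xB = Ideal.Quotient.mk _ (X : Polynomial A)) :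
    (∀ (φ : B →ₐ[A] B) (a : Fin n → A), a ⟨0, by omega⟩ = 0 →
      φ xB = ∑ j : Fin n, algebraMap A B (a j) * xB ^ (j : ℕ) →
        (Function.Bijective φ ↔ IsUnit (a ⟨1, by omega⟩))) ∧
    Nonempty ((B ≃ₐ[A] B) ≃ (Aˣ × (Fin (n - 2) → A))) := by
  rcases subsingleton_or_nontrivial A with hA | hA
  · have hB : Subsingleton B := by
      have h10 : (1 : B) = 0 := by
        rw [← (algebraMap A B).map_one, ← (algebraMap A B).map_zero]
        exact congrArg _ (Subsingleton.elim _ _)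
      exact subsingleton_of_zero_eq_one h10.symm
    haveI : Subsingleton (B ≃ₐ[A] B) :=
      ⟨fun f g => AlgEquiv.ext fun x => Subsingleton.elim _ _⟩
    haveI : Subsingleton (Aˣ × (Fin (n - 2) → A)) := by infer_instance
    constructor
    · intro φ a _ _
      constructor
      · intro _
        exact isUnit_of_subsingleton _
      · intro _
        exact ⟨fun x y _ => Subsingleton.elim x y, fun y => ⟨y, Subsingleton.elim _ _⟩⟩
    · exact ⟨equivOfSubsingletonOfSubsingleton
        (fun _ => (1, fun _ => 0)) (fun _ => AlgEquiv.refl)⟩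
  · let e' : B ≃ₐ[A] AdjoinRoot ((X : Polynomial A) ^ n) := e
    have hb : e' xB = AdjoinRoot.root ((X : Polynomial A) ^ n) := by exact hx
    constructor
    · intro φ a h0 hφ
      set ψ : AdjoinRoot ((X : Polynomial A) ^ n) →ₐ[A] AdjoinRoot ((X : Polynomial A) ^ n) :=
        (e'.toAlgHom.comp φ).comp e'.symm.toAlgHom with hψ
      have hψr : ψ (AdjoinRoot.root ((X : Polynomial A) ^ n)) = comb a := by
        show e' (φ (e'.symm (AdjoinRoot.root ((X : Polynomial A) ^ n)))) = comb a
        have h1 : e'.symm (AdjoinRoot.root ((X : Polynomial A) ^ n)) = xB := by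
          rw [← hb, e'.symm_apply_apply]
        rw [h1, hφ, map_sum, comb_eq]
        refine Finset.sum_congr rfl fun j _ => ?_
        rw [map_mul, map_pow, hb, AlgEquiv.commutes]
      have hbij : Function.Bijective φ ↔ Function.Bijective ψ := by
        constructor
        · intro h
          exact (e'.bijective.comp h).comp e'.symm.bijective
        · intro h
          have hco : ⇑φ = ⇑e'.symm ∘ ⇑ψ ∘ ⇑e' := by
            funext x
            simp [hψ]
          rw [hco]
          exact (e'.symm.bijective.comp h).comp e'.bijective
      rw [hbij]
      exact bij_iff hn ψ a h0 hψr
    · exact ⟨(AlgEquiv.autCongr e').toEquiv.trans (autEquivQ hn)⟩
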